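/- arXiv:1009.3318 — 2 statements merged into one kernel-verified Lean document; each statement's English description precedes it below -/
import Mathlib

section
/- Let G(p) be a framework on n nodes in general position in ℝ^r with r ≤ n−2, admitting a positive semidefinite stress matrix of rank n−r−1. Then there does not exist a framework G(q) in ℝ^r with q^i = Ap^i + b for all i that is equivalent (equal edge lengths) but not congruent to G(p). -/
open Matrix

/-- The (r+1)×n matrix whose j-th column is (p^j, 1). -/
def calA {n r : ℕ} (p : Fin n → EuclideanSpace ℝ (Fin r)) :
    Matrix (Fin (r + 1)) (Fin n) ℝ :=
  fun i j => if h : (i : ℕ) < r then p j ⟨i, h⟩ else 1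

/-- No subset of the points of cardinality r+1 is affinely dependent. -/
def InGeneralPosition {n r : ℕ} (p : Fin n → EuclideanSpace ℝ (Fin r)) : Prop :=
  ∀ s : Finset (Fin n), s.card = r + 1 →
    AffineIndependent ℝ (fun i : {x // x ∈ s} => p i)

/-- `S` is a stress matrix of the framework `G(p)`. -/
def IsStressMatrix {n r : ℕ} (G : SimpleGraph (Fin n))
    (p : Fin n → EuclideanSpace ℝ (Fin r)) (S : Matrix (Fin n) (Fin n) ℝ) : Prop :=
  S.IsSymm ∧ (∀ i j, i ≠ j → ¬ G.Adj i j → S i j = 0) ∧ calA p * S = 0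

section helpers
variable {n r : ℕ} {p : Fin n → EuclideanSpace ℝ (Fin r)}

lemma euclid_sum_apply {ι : Type*} (s : Finset ι) (f : ι → EuclideanSpace ℝ (Fin r)) (i : Fin r) :
    (∑ x ∈ s, f x) i = ∑ x ∈ s, f x i :=
  map_sum (AddMonoidHom.mk' (fun v : EuclideanSpace ℝ (Fin r) => v i) (fun _ _ => rfl)) f s

lemma calA_last (j : Fin n) : calA p (Fin.last r) j = 1 := by simp [calA]

lemma calA_castSucc (i : Fin r) (j : Fin n) : calA p (Fin.castSucc i) j = p j i := by
  simp only [calA]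
  rw [dif_pos (by simpa using i.isLt)]
  exact congrArg (p j) (by ext; simp)

/-- Columns of `calA` indexed by a set of cardinality `r+1` are linearly independent. -/
lemma cols_linearIndependent (hgen : InGeneralPosition p) (J : Finset (Fin n))
    (hJ : J.card = r + 1) :
    LinearIndependent ℝ (fun j : {x // x ∈ J} => (fun i => calA p i (j : Fin n) : Fin (r+1) → ℝ)) := by
  rw [Fintype.linearIndependent_iff]
  intro g hg
  have hai := hgen J hJ
  have hsum0 : ∑ j : {x // x ∈ J}, g j = 0 := by
    have := congrFun hg (Fin.last r)
    simpa [calA_last] using this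
  have hpts : ∑ j : {x // x ∈ J}, g j • p (j : Fin n) = 0 := by
    ext i
    have := congrFun hg (Fin.castSucc i)
    simp only [Finset.sum_apply, Pi.smul_apply, Pi.zero_apply, smul_eq_mul, calA_castSucc] at this
    rw [euclid_sum_apply]
    simpa [PiLp.smul_apply] using this
  have := affineIndependent_iff.mp hai Finset.univ g (by simpa using hsum0) (by simpa using hpts)
  intro j; exact this j (Finset.mem_univ j)

/-- If an "affine functional" vanishes on r+1 points in general position, it is zero. -/
lemma affine_vanish (hgen : InGeneralPosition p) (y : Fin (r+1) → ℝ)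
    (J : Finset (Fin n)) (hJ : J.card = r + 1)
    (hy : ∀ j ∈ J, ((calA p)ᵀ *ᵥ y) j = 0) : y = 0 := by
  haveI : Nonempty {x // x ∈ J} := by
    have h : J.Nonempty := Finset.card_pos.mp (by omega)
    exact ⟨⟨h.choose, h.choose_spec⟩⟩
  set a : {x // x ∈ J} → (Fin (r+1) → ℝ) := fun j => (fun i => calA p i (j : Fin n)) with ha
  have hli := cols_linearIndependent hgen J hJ
  have hspan : Submodule.span ℝ (Set.range a) = ⊤ := by
    apply hli.span_eq_top_of_card_eq_finrank
    simp [hJ, Fintype.card_coe]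
  have hy' : ∀ j : {x // x ∈ J}, a j ⬝ᵥ y = 0 := by
    intro j
    have := hy j j.2
    simpa [Matrix.mulVec, dotProduct, Matrix.transpose_apply, ha] using this
  have hmem : y ∈ Submodule.span ℝ (Set.range a) := hspan ▸ Submodule.mem_top
  obtain ⟨c, hc⟩ := (Submodule.mem_span_range_iff_exists_fun ℝ).mp hmem
  have hyy : y ⬝ᵥ y = 0 := by
    nth_rewrite 1 [← hc]
    simp only [dotProduct, Finset.sum_apply, Pi.smul_apply, smul_eq_mul, Finset.sum_mul]
    rw [Finset.sum_comm]
    refine Finset.sum_eq_zero fun j _ => ?_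
    have h0 := hy' j
    simp only [dotProduct] at h0
    calc ∑ i, c j * a j i * y i = c j * ∑ i, a j i * y i := by
          rw [Finset.mul_sum]; exact Finset.sum_congr rfl fun i _ => by ring
      _ = 0 := by rw [h0, mul_zero]
  exact dotProduct_self_eq_zero.mp hyy
end helpers

section helpers2
variable {n r : ℕ} {p : Fin n → EuclideanSpace ℝ (Fin r)}

/-- A vector in ker(calA) supported on ≤ r+1 coordinates is zero. -/
lemma small_support_zero (hgen : InGeneralPosition p) (hn : r + 1 ≤ n)
    (c : Fin n → ℝ) (hc : calA p *ᵥ c = 0) (T : Finset (Fin n)) (hT : T.card ≤ r + 1)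
    (hsupp : ∀ j ∉ T, c j = 0) : c = 0 := by
  obtain ⟨J, hTJ, -, hJcard⟩ := Finset.exists_subsuperset_card_eq (Finset.subset_univ T) hT
    (by simpa using hn)
  have hai := hgen J hJcard
  have hzero : ∀ j, j ∉ J → c j = 0 := fun j hj => hsupp j (fun h => hj (hTJ h))
  have hsum0 : ∑ j : {x // x ∈ J}, c (j : Fin n) = 0 := by
    rw [Finset.sum_coe_sort J (fun j => c j)]
    rw [Finset.sum_subset (Finset.subset_univ J) (fun x _ hx => hzero x hx)]
    have := congrFun hc (Fin.last r)
    simpa [Matrix.mulVec, dotProduct, calA_last] using this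
  have hpts : ∑ j : {x // x ∈ J}, c (j : Fin n) • p (j : Fin n) = 0 := by
    ext i
    rw [euclid_sum_apply]
    simp only [PiLp.smul_apply, smul_eq_mul]
    rw [Finset.sum_coe_sort J (fun j => c j * p j i)]
    simp only [PiLp.zero_apply]
    rw [Finset.sum_subset (Finset.subset_univ J)
      (fun x _ hx => by rw [hzero x hx, zero_mul])]
    have := congrFun hc (Fin.castSucc i)
    simpa [Matrix.mulVec, dotProduct, calA_castSucc, mul_comm] using this
  have hJz := affineIndependent_iff.mp hai Finset.univ (fun j => c (j : Fin n))
    (by simpa using hsum0) (by simpa using hpts)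
  funext j
  by_cases hj : j ∈ J
  · exact hJz ⟨j, hj⟩ (Finset.mem_univ _)
  · exact hzero j hj

/-- ker S = range calAᵀ -/
lemma ker_S_eq (hn : r + 2 ≤ n) (hgen : InGeneralPosition p)
    (S : Matrix (Fin n) (Fin n) ℝ) (hsymm : S.IsSymm) (hAS : calA p * S = 0)
    (hrank : S.rank = n - r - 1) (v : Fin n → ℝ) (hv : S *ᵥ v = 0) :
    ∃ y, (calA p)ᵀ *ᵥ y = v := by
  have hSA : S * (calA p)ᵀ = 0 := by
    have h := congrArg Matrix.transpose hAS
    rw [Matrix.transpose_mul, hsymm.eq] at h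
    simpa using h
  set f := S.mulVecLin
  set g := ((calA p)ᵀ).mulVecLin
  have hle : LinearMap.range g ≤ LinearMap.ker f := by
    rintro _ ⟨y, rfl⟩
    show S *ᵥ ((calA p)ᵀ *ᵥ y) = 0
    rw [Matrix.mulVec_mulVec, hSA]
    simp
  have hginj : Function.Injective g := by
    rw [← LinearMap.ker_eq_bot]
    apply (Submodule.eq_bot_iff _).mpr
    intro y hy
    obtain ⟨J, -, hJcard⟩ := Finset.exists_subset_card_eq (s := (Finset.univ : Finset (Fin n)))
      (show r + 1 ≤ (Finset.univ : Finset (Fin n)).card by simpa using by omega)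
    exact affine_vanish hgen y J hJcard (fun j _ => congrFun hy j)
  have hrg : Module.finrank ℝ ↥(LinearMap.range g) = r + 1 := by
    rw [LinearMap.finrank_range_of_inj hginj]
    simp [Module.finrank_fintype_fun_eq_card]
  have hrn := LinearMap.finrank_range_add_finrank_ker f
  have hfr : Module.finrank ℝ ↥(LinearMap.range f) = n - r - 1 := hrank
  have hdim : Module.finrank ℝ ↥(LinearMap.ker f) ≤ r + 1 := by
    rw [Module.finrank_fintype_fun_eq_card] at hrn
    simp at hrn
    omega
  have heq : LinearMap.range g = LinearMap.ker f :=
    Submodule.eq_of_le_of_finrank_le hle (by omega)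
  have : v ∈ LinearMap.ker f := by simpa [f, LinearMap.mem_ker] using hv
  rw [← heq] at this
  exact this

end helpers2

theorem no_affine_flex_of_general_position {n r : ℕ} (hn : r + 2 ≤ n)
    (G : SimpleGraph (Fin n)) (p : Fin n → EuclideanSpace ℝ (Fin r))
    (hgen : InGeneralPosition p)
    (hspan : affineSpan ℝ (Set.range p) = ⊤)
    (S : Matrix (Fin n) (Fin n) ℝ) (hS : IsStressMatrix G p S)
    (hpsd : S.PosSemidef) (hrank : S.rank = n - r - 1) :
    ¬ ∃ (q : Fin n → EuclideanSpace ℝ (Fin r)) (A : Matrix (Fin r) (Fin r) ℝ)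
        (b : EuclideanSpace ℝ (Fin r)),
      (∀ i, q i = Matrix.toEuclideanLin A (p i) + b) ∧
      (∀ i j, G.Adj i j → dist (q i) (q j) = dist (p i) (p j)) ∧
      ¬ (∀ i j, dist (q i) (q j) = dist (p i) (p j)) := by
  classical
  rintro ⟨q, A, b, hq, hequiv, hncong⟩
  obtain ⟨hsymm, hsupp, hAS⟩ := hS
  have hsij : ∀ a b, S a b = S b a := fun a b =>
    (congrFun (congrFun hsymm a) b).symm
  set L := Matrix.toEuclideanLin A with hL
  set F : Matrix (Fin n) (Fin n) ℝ :=
    fun i j => dist (q i) (q j) ^ 2 - dist (p i) (p j) ^ 2 with hF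
  have hFsymm : ∀ i j, F i j = F j i := fun i j => by
    simp [hF, dist_comm]
  have hFdiag : ∀ i, F i i = 0 := fun i => by simp [hF]
  have hFedge : ∀ i j, G.Adj i j → F i j = 0 := fun i j h => by
    simp [hF, hequiv i j h]
  set u : Fin n → ℝ := fun i => ‖L (p i)‖ ^ 2 - ‖p i‖ ^ 2 with hu
  have hFexp : ∀ i j, F i j = u i + u j
      - 2 * ((inner ℝ (L (p i)) (L (p j)) : ℝ) - (inner ℝ (p i) (p j) : ℝ)) := by
    intro i j
    have hqd : q i - q j = L (p i) - L (p j) := by rw [hq i, hq j]; abel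
    have e1 : dist (q i) (q j) ^ 2 = ‖L (p i) - L (p j)‖ ^ 2 := by
      rw [dist_eq_norm, hqd]
    show dist (q i) (q j) ^ 2 - dist (p i) (p j) ^ 2 = _
    rw [e1, dist_eq_norm, norm_sub_sq_real, norm_sub_sq_real]
    show _ = (‖L (p i)‖ ^ 2 - ‖p i‖ ^ 2) + (‖L (p j)‖ ^ 2 - ‖p j‖ ^ 2) - _
    ring
  -- key linearity property
  have hkey : ∀ (c : Fin n → ℝ), calA p *ᵥ c = 0 → ∀ i,
      ∑ j, F i j * c j = ∑ j, c j * u j := by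
    intro c hc i
    have hc0 : ∑ j, c j = 0 := by
      have := congrFun hc (Fin.last r)
      simpa [Matrix.mulVec, dotProduct, calA_last] using this
    have hcp : ∑ j, c j • p j = 0 := by
      ext i'
      rw [euclid_sum_apply]
      simp only [PiLp.smul_apply, smul_eq_mul, PiLp.zero_apply]
      have := congrFun hc (Fin.castSucc i')
      simpa [Matrix.mulVec, dotProduct, calA_castSucc, mul_comm] using this
    have h1 : ∑ j, (inner ℝ (L (p i)) (L (p j)) : ℝ) * c j = 0 := by
      calc ∑ j, (inner ℝ (L (p i)) (L (p j)) : ℝ) * c j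
          = ∑ j, (inner ℝ (L (p i)) (c j • L (p j)) : ℝ) := by
            refine Finset.sum_congr rfl fun j _ => ?_
            rw [real_inner_smul_right]; ring
        _ = (inner ℝ (L (p i)) (∑ j, c j • L (p j)) : ℝ) := (inner_sum _ _ _).symm
        _ = (inner ℝ (L (p i)) (L (∑ j, c j • p j)) : ℝ) := by
            congr 1
            rw [map_sum]
            exact Finset.sum_congr rfl fun j _ => (map_smul L (c j) (p j)).symm
        _ = 0 := by rw [hcp, map_zero, inner_zero_right]
    have h2 : ∑ j, (inner ℝ (p i) (p j) : ℝ) * c j = 0 := by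
      calc ∑ j, (inner ℝ (p i) (p j) : ℝ) * c j
          = ∑ j, (inner ℝ (p i) (c j • p j) : ℝ) := by
            refine Finset.sum_congr rfl fun j _ => ?_
            rw [real_inner_smul_right]; ring
        _ = (inner ℝ (p i) (∑ j, c j • p j) : ℝ) := (inner_sum _ _ _).symm
        _ = 0 := by rw [hcp, inner_zero_right]
    calc ∑ j, F i j * c j
        = ∑ j, (u i * c j + c j * u j
            - 2 * ((inner ℝ (L (p i)) (L (p j)) : ℝ) * c j - (inner ℝ (p i) (p j) : ℝ) * c j)) := by
          refine Finset.sum_congr rfl fun j _ => ?_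
          rw [hFexp i j]; ring
      _ = u i * (∑ j, c j) + (∑ j, c j * u j)
            - 2 * ((∑ j, (inner ℝ (L (p i)) (L (p j)) : ℝ) * c j)
              - (∑ j, (inner ℝ (p i) (p j) : ℝ) * c j)) := by
          rw [Finset.sum_sub_distrib, Finset.sum_add_distrib, ← Finset.mul_sum,
            ← Finset.mul_sum, Finset.sum_sub_distrib]
      _ = ∑ j, c j * u j := by rw [hc0, h1, h2]; ring
  -- columns of S lie in ker calA
  have hcol : ∀ k, calA p *ᵥ (fun j => S j k) = 0 := by
    intro k
    funext i
    have := congrFun (congrFun hAS i) k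
    simpa [Matrix.mul_apply, Matrix.mulVec, dotProduct] using this
  have hFS : ∀ i k, ∑ j, F i j * S j k = ∑ j, (S j k) * u j :=
    fun i k => hkey (fun j => S j k) (hcol k) i
  -- S * u = 0
  have hSu : ∀ k, ∑ j, (S j k) * u j = 0 := by
    intro k
    rw [← hFS k k]
    refine Finset.sum_eq_zero fun j _ => ?_
    by_cases hjk : j = k
    · subst hjk; rw [hFdiag, zero_mul]
    · by_cases hadj : G.Adj k j
      · rw [hFedge k j hadj, zero_mul]
      · rw [hsupp j k hjk (fun h => hadj h.symm), mul_zero]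
  have hFS0 : ∀ i k, ∑ j, F i j * S j k = 0 := fun i k => by rw [hFS i k, hSu k]
  -- columns of F lie in ker S
  have hFcol : ∀ i, S *ᵥ (fun j => F j i) = 0 := by
    intro i
    funext k
    show ∑ j, S k j * F j i = 0
    rw [← hFS0 i k]
    exact Finset.sum_congr rfl fun j _ => by rw [hsij k j, hFsymm j i]; ring
  -- degree bound: column i of S is nonzero
  have hScol_ne : ∀ i, (fun j => S j i) ≠ 0 := by
    intro i hzero
    have hei : S *ᵥ (Pi.single i 1) = 0 := by
      funext k
      simp only [Matrix.mulVec, dotProduct, Pi.zero_apply]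
      rw [Finset.sum_eq_single i (fun j _ hj => by rw [Pi.single_eq_of_ne hj, mul_zero])
        (fun h => absurd (Finset.mem_univ i) h)]
      rw [Pi.single_eq_same, mul_one]
      exact congrFun hzero k
    obtain ⟨y, hy⟩ := ker_S_eq hn hgen S hsymm hAS hrank _ hei
    obtain ⟨J, hJsub, hJcard⟩ := Finset.exists_subset_card_eq
      (show r + 1 ≤ (Finset.univ.erase i).card by
        rw [Finset.card_erase_of_mem (Finset.mem_univ i)]
        simp; omega)
    have hy0 : y = 0 := by
      refine affine_vanish hgen y J hJcard fun j hj => ?_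
      rw [hy]
      have : j ≠ i := Finset.ne_of_mem_erase (hJsub hj)
      exact Pi.single_eq_of_ne this 1
    rw [hy0] at hy
    have := congrFun hy i
    simp [Matrix.mulVec] at this
  -- the closed neighborhood of i has at least r+1 elements
  have hdeg : ∀ i, r + 1 ≤ (insert i (Finset.univ.filter (fun j => G.Adj i j))).card := by
    intro i
    by_contra hlt
    push_neg at hlt
    refine hScol_ne i (small_support_zero hgen (by omega) _ (hcol i)
      (insert i (Finset.univ.filter (fun j => G.Adj i j))) (by omega) ?_)
    intro j hj
    simp only [Finset.mem_insert, Finset.mem_filter, Finset.mem_univ, true_and, not_or] at hj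
    exact hsupp j i (hj.1) (fun h => hj.2 h.symm)
  -- columns of F vanish
  have hFzero : ∀ i j, F j i = 0 := by
    intro i
    obtain ⟨y, hy⟩ := ker_S_eq hn hgen S hsymm hAS hrank _ (hFcol i)
    obtain ⟨J, hJsub, hJcard⟩ := Finset.exists_subset_card_eq (hdeg i)
    have hy0 : y = 0 := by
      refine affine_vanish hgen y J hJcard fun j hj => ?_
      rw [hy]
      have := hJsub hj
      simp only [Finset.mem_insert, Finset.mem_filter, Finset.mem_univ, true_and] at this
      show F j i = 0
      rcases this with h | h
      · rw [h]; exact hFdiag i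
      · rw [← hFsymm]; exact hFedge i j h
    rw [hy0] at hy
    intro j
    have := congrFun hy j
    simpa [Matrix.mulVec] using this.symm
  -- conclude congruence, contradiction
  apply hncong
  intro i j
  have h0 : dist (q i) (q j) ^ 2 = dist (p i) (p j) ^ 2 := by
    have := hFzero j i
    simp only [hF] at this
    linarith
  rw [← Real.sqrt_sq dist_nonneg, h0, Real.sqrt_sq dist_nonneg]
end

section
/- Let G(p) be a framework on n nodes in general position in ℝ^r, r ≤ n−2, admitting a positive semidefinite stress matrix S of rank n−r−1. Then G(p) is universally rigid: every framework G(q) in any Euclidean space ℝ^s satisfying ‖q^i − q^j‖ = ‖p^i − p^j‖ for all edges (i,j) of G also satisfies ‖q^i − q^j‖ = ‖p^i − p^j‖ for all pairs i,j. -/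
open Matrix

namespace URAux

variable {n r : ℕ}

/-- Column `j` of `calA p`, i.e. the lifted point `(p^j, 1)`. -/
def colA (p : Fin n → EuclideanSpace ℝ (Fin r)) (j : Fin n) : Fin (r + 1) → ℝ :=
  fun m => calA p m j

lemma colA_castSucc (p : Fin n → EuclideanSpace ℝ (Fin r)) (j : Fin n) (m : Fin r) :
    colA p j (Fin.castSucc m) = p j m := by
  simp only [colA, calA, Fin.coe_castSucc]
  rw [dif_pos m.isLt]

lemma colA_last (p : Fin n → EuclideanSpace ℝ (Fin r)) (j : Fin n) :
    colA p j (Fin.last r) = 1 := by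
  simp [colA, calA]

/-- dot product as a linear map in the second argument -/
noncomputable def dotL (c : Fin (r + 1) → ℝ) : (Fin (r + 1) → ℝ) →ₗ[ℝ] ℝ where
  toFun z := c ⬝ᵥ z
  map_add' x y := by simp [dotProduct_add]
  map_smul' a x := by simp [dotProduct_smul, smul_eq_mul]

@[simp] lemma dotL_apply (c z : Fin (r + 1) → ℝ) : dotL c z = c ⬝ᵥ z := rfl

/-- The quadratic form `z ↦ ∑ₖ (Cₖ⬝x)(Cₖ⬝z) − x⬝z`, linear in `z`. -/
noncomputable def gL {s : ℕ} (C : Fin s → Fin (r + 1) → ℝ) (a : Fin (r + 1) → ℝ) :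
    (Fin (r + 1) → ℝ) →ₗ[ℝ] ℝ :=
  (∑ k, (C k ⬝ᵥ a) • dotL (C k)) - dotL a

lemma gL_apply {s : ℕ} (C : Fin s → Fin (r + 1) → ℝ) (a z : Fin (r + 1) → ℝ) :
    gL C a z = (∑ k, (C k ⬝ᵥ a) * (C k ⬝ᵥ z)) - a ⬝ᵥ z := by
  simp [gL, LinearMap.sum_apply]

lemma gL_symm {s : ℕ} (C : Fin s → Fin (r + 1) → ℝ) (a b : Fin (r + 1) → ℝ) :
    gL C a b = gL C b a := by
  rw [gL_apply, gL_apply, dotProduct_comm]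
  congr 1
  exact Finset.sum_congr rfl fun k _ => mul_comm _ _

lemma gL_expand {s : ℕ} (C : Fin s → Fin (r + 1) → ℝ) (a b : Fin (r + 1) → ℝ) :
    gL C (a - b) (a - b) = gL C a a - 2 * gL C a b + gL C b b := by
  simp only [gL_apply, dotProduct_sub, sub_dotProduct]
  rw [show (∑ k, (C k ⬝ᵥ a - C k ⬝ᵥ b) * (C k ⬝ᵥ a - C k ⬝ᵥ b))
      = (∑ k, (C k ⬝ᵥ a) * (C k ⬝ᵥ a)) - 2 * (∑ k, (C k ⬝ᵥ a) * (C k ⬝ᵥ b))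
        + (∑ k, (C k ⬝ᵥ b) * (C k ⬝ᵥ b)) by
    rw [Finset.mul_sum, ← Finset.sum_sub_distrib, ← Finset.sum_add_distrib]
    exact Finset.sum_congr rfl fun k _ => by ring]
  rw [dotProduct_comm b a]
  ring

/-- The corrected form `h`. -/
noncomputable def hL {s : ℕ} (C : Fin s → Fin (r + 1) → ℝ) (d w a : Fin (r + 1) → ℝ) :
    (Fin (r + 1) → ℝ) →ₗ[ℝ] ℝ :=
  gL C a - ((d ⬝ᵥ a) / 2) • dotL w - ((w ⬝ᵥ a) / 2) • dotL d

lemma hL_apply {s : ℕ} (C : Fin s → Fin (r + 1) → ℝ) (d w a z : Fin (r + 1) → ℝ) :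
    hL C d w a z = gL C a z - (d ⬝ᵥ a) / 2 * (w ⬝ᵥ z) - (w ⬝ᵥ a) / 2 * (d ⬝ᵥ z) := by
  simp [hL]

lemma hL_symm {s : ℕ} (C : Fin s → Fin (r + 1) → ℝ) (d w a b : Fin (r + 1) → ℝ) :
    hL C d w a b = hL C d w b a := by
  simp only [hL_apply, gL_symm C a b, dotProduct_comm d, dotProduct_comm w]
  ring

section GP

variable {p : Fin n → EuclideanSpace ℝ (Fin r)}

lemma euc_sum_apply {ι : Type*} (s : Finset ι) (f : ι → EuclideanSpace ℝ (Fin r))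
    (m : Fin r) : (∑ e ∈ s, f e) m = ∑ e ∈ s, f e m := by
  induction s using Finset.cons_induction with
  | empty => rfl
  | cons a s ha ih => rw [Finset.sum_cons, Finset.sum_cons, PiLp.add_apply, ih]

/-- General position implies any `r+1` lifted columns are linearly independent. -/
lemma colA_li (hgen : InGeneralPosition p) (t : Finset (Fin n)) (ht : t.card = r + 1) :
    LinearIndependent ℝ (fun j : {x // x ∈ t} => colA p j) := by
  rw [Fintype.linearIndependent_iff]
  intro g hg
  have haff := hgen t ht
  have hsum : (Finset.univ : Finset {x // x ∈ t}).sum g = 0 := by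
    have := congrFun hg (Fin.last r)
    simpa [Finset.sum_apply, colA_last] using this
  have hvec : ∑ e : {x // x ∈ t}, g e • p (e : Fin n) = 0 := by
    ext m
    rw [euc_sum_apply]
    have := congrFun hg (Fin.castSucc m)
    simp only [Finset.sum_apply, Pi.smul_apply, smul_eq_mul, Pi.zero_apply] at this
    simp only [colA_castSucc] at this
    simpa [PiLp.smul_apply, smul_eq_mul] using this
  exact fun j =>
    affineIndependent_iff.mp haff Finset.univ g hsum hvec j (Finset.mem_univ j)

lemma colA_span_top (hgen : InGeneralPosition p) (t : Finset (Fin n)) (ht : t.card = r + 1) :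
    Submodule.span ℝ (Set.range (fun j : {x // x ∈ t} => colA p j)) = ⊤ := by
  have hne : Nonempty {x // x ∈ t} := by
    rw [Finset.nonempty_coe_sort]
    exact Finset.card_pos.mp (by omega)
  exact (colA_li hgen t ht).span_eq_top_of_card_eq_finrank
    (by simp [Fintype.card_coe, ht, Module.finrank_fintype_fun_eq_card])

/-- A functional vanishing on `r+1` lifted columns vanishes everywhere. -/
lemma vanish_of_vanish_on (hgen : InGeneralPosition p) (t : Finset (Fin n))
    (ht : t.card = r + 1) (f : (Fin (r + 1) → ℝ) →ₗ[ℝ] ℝ)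
    (hf : ∀ j ∈ t, f (colA p j) = 0) : f = 0 := by
  apply LinearMap.ext_on_range (colA_span_top hgen t ht)
  exact fun j => hf j j.2

end GP

end URAux

open URAux in
/-- Main theorem: a framework in general position admitting a positive semidefinite
stress matrix of rank `n - r - 1` is universally rigid. -/
theorem universally_rigid_of_general_position {n r : ℕ} (hn : r + 2 ≤ n)
    (G : SimpleGraph (Fin n)) (G_conn : G.Connected)
    (p : Fin n → EuclideanSpace ℝ (Fin r))
    (hgen : InGeneralPosition p)
    (hspan : affineSpan ℝ (Set.range p) = ⊤)
    (S : Matrix (Fin n) (Fin n) ℝ) (hS : IsStressMatrix G p S)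
    (hpsd : S.PosSemidef) (hrank : S.rank = n - r - 1) :
    ∀ (s : ℕ) (q : Fin n → EuclideanSpace ℝ (Fin s)),
      (∀ i j, G.Adj i j → dist (q i) (q j) = dist (p i) (p j)) →
      (∀ i j, dist (q i) (q j) = dist (p i) (p j)) := by
  classical
  obtain ⟨hsymm, hsupp, hAS⟩ := hS
  intro s q hq
  -- the key identity: every row of S annihilates the lifted columns
  have key : ∀ (i : Fin n) (m : Fin (r + 1)), ∑ j, S i j * calA p m j = 0 := by
    intro i m
    have h0 : (calA p * S) m i = 0 := by rw [hAS]; rfl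
    rw [Matrix.mul_apply] at h0
    rw [← h0]
    exact Finset.sum_congr rfl fun j _ => by rw [hsymm.apply i j, mul_comm]
  have rowsum : ∀ i : Fin n, ∑ j, S i j = 0 := by
    intro i
    have := key i (Fin.last r)
    simpa [calA] using this
  have scol : ∀ i : Fin n, ∑ j, S i j • colA p j = 0 := by
    intro i
    funext m
    simpa [Finset.sum_apply, colA] using key i m
  -- rows of calA lie in the kernel of S
  have rows_ker : ∀ m : Fin (r + 1), S.mulVec (fun j => calA p m j) = 0 := by
    intro m
    funext i
    simpa [Matrix.mulVec, dotProduct] using key i m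
  -- rows of calA are linearly independent
  have rows_li : LinearIndependent ℝ (fun m : Fin (r + 1) => (fun j => calA p m j)) := by
    rw [Fintype.linearIndependent_iff]
    intro g hg
    obtain ⟨t, -, ht⟩ := Finset.exists_subset_card_eq
      (show r + 1 ≤ (Finset.univ : Finset (Fin n)).card by simp; omega)
    have hvan : ∀ j ∈ t, (dotL g) (colA p j) = 0 := by
      intro j _
      have := congrFun hg j
      simpa [Finset.sum_apply, dotL, dotProduct, colA] using this
    have := vanish_of_vanish_on hgen t ht (dotL g) hvan
    intro m
    have := congrFun (congrArg (fun (f : (Fin (r+1) → ℝ) →ₗ[ℝ] ℝ) =>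
      (f : (Fin (r+1) → ℝ) → ℝ)) this) (Pi.single m 1)
    simpa [dotL, dotProduct_single] using this
  -- the kernel of S equals the span of the rows of calA
  have ker_eq : LinearMap.ker S.mulVecLin
      = Submodule.span ℝ (Set.range (fun m : Fin (r + 1) => (fun j => calA p m j))) := by
    have hle : Submodule.span ℝ (Set.range (fun m : Fin (r + 1) => (fun j => calA p m j)))
        ≤ LinearMap.ker S.mulVecLin := by
      rw [Submodule.span_le]
      rintro x ⟨m, rfl⟩
      simpa [LinearMap.mem_ker] using rows_ker m
    have h1 : S.rank + Module.finrank ℝ (LinearMap.ker S.mulVecLin) = n := by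
      have := LinearMap.finrank_range_add_finrank_ker S.mulVecLin
      simpa [Matrix.rank, Module.finrank_fintype_fun_eq_card] using this
    have hkerrank : Module.finrank ℝ (LinearMap.ker S.mulVecLin) = r + 1 := by
      rw [hrank] at h1; omega
    have hspanrank : Module.finrank ℝ
        (Submodule.span ℝ (Set.range (fun m : Fin (r + 1) => (fun j => calA p m j))))
        = r + 1 := by
      rw [finrank_span_eq_card rows_li]; simp
    exact (Submodule.eq_of_le_of_finrank_le hle (by rw [hkerrank, hspanrank])).symm
  have mem_ker : ∀ v : Fin n → ℝ, S.mulVec v = 0 →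
      ∃ c : Fin (r + 1) → ℝ, ∀ j, v j = c ⬝ᵥ colA p j := by
    intro v hv
    have hvmem : v ∈ LinearMap.ker S.mulVecLin := by simpa [LinearMap.mem_ker] using hv
    rw [ker_eq, Submodule.mem_span_range_iff_exists_fun] at hvmem
    obtain ⟨c, hc⟩ := hvmem
    refine ⟨c, fun j => ?_⟩
    have := congrFun hc j
    simp only [Finset.sum_apply, Pi.smul_apply, smul_eq_mul] at this
    rw [← this]
    simp [dotProduct, colA]
  -- every closed neighbourhood contains r+1 vertices
  have nbhd : ∀ i : Fin n, ∃ t : Finset (Fin n),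
      (∀ j ∈ t, j = i ∨ G.Adj i j) ∧ t.card = r + 1 := by
    intro i
    set N : Finset (Fin n) := Finset.univ.filter (fun j => j = i ∨ G.Adj i j) with hN
    by_cases hcard : r + 1 ≤ N.card
    · obtain ⟨t, hts, ht⟩ := Finset.exists_subset_card_eq hcard
      exact ⟨t, fun j hj => (Finset.mem_filter.mp (hts hj)).2, ht⟩
    · exfalso
      have hcard' : N.card ≤ r + 1 := by omega
      -- extend N to a set of size r+1
      obtain ⟨t, hNt, -, ht⟩ := Finset.exists_subsuperset_card_eq (Finset.subset_univ N)
        hcard' (show r + 1 ≤ (Finset.univ : Finset (Fin n)).card by simp; omega)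
      -- row i of S vanishes
      have hrow : ∀ j, S i j = 0 := by
        have hli := colA_li hgen t ht
        rw [Fintype.linearIndependent_iff] at hli
        have hsum : ∑ j : {x // x ∈ t}, (S i j) • colA p (j : Fin n) = 0 := by
          rw [Finset.sum_coe_sort t (fun j => S i j • colA p j)]
          rw [← scol i]
          apply Finset.sum_subset (Finset.subset_univ t)
          intro j _ hjt
          have hjN : j ∉ N := fun h => hjt (hNt h)
          have : ¬(j = i ∨ G.Adj i j) := by
            intro h; exact hjN (by simp [hN, h])
          push_neg at this
          rw [hsupp i j (Ne.symm this.1) this.2, zero_smul]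
        have hz := hli (fun j => S i (j : Fin n)) hsum
        intro j
        by_cases hjt : j ∈ t
        · exact hz ⟨j, hjt⟩
        · have hjN : j ∉ N := fun h => hjt (hNt h)
          have : ¬(j = i ∨ G.Adj i j) := by
            intro h; exact hjN (by simp [hN, h])
          push_neg at this
          exact hsupp i j (Ne.symm this.1) this.2
      -- then eᵢ is in the kernel, contradicting general position
      have hei : S.mulVec (Pi.single i 1) = 0 := by
        funext j
        simp [Matrix.mulVec, dotProduct_single, hsymm.apply i j, hrow j]
      obtain ⟨c, hc⟩ := mem_ker _ hei
      obtain ⟨t', ht'sub, ht'⟩ := Finset.exists_subset_card_eq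
        (show r + 1 ≤ (Finset.univ.erase i).card by
          rw [Finset.card_erase_of_mem (Finset.mem_univ i)]; simp; omega)
      have hvan : ∀ j ∈ t', (dotL c) (colA p j) = 0 := by
        intro j hj
        have hji : j ≠ i := Finset.ne_of_mem_erase (ht'sub hj)
        have := hc j
        simp only [dotL_apply]
        rw [← this, Pi.single_apply, if_neg hji]
      have := vanish_of_vanish_on hgen t' ht' (dotL c) hvan
      have h1 : (dotL c) (colA p i) = 0 := by rw [this]; rfl
      rw [dotL_apply, ← hc i, Pi.single_eq_same] at h1
      exact one_ne_zero h1
  -- squared distances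
  set dq : Fin n → Fin n → ℝ := fun i j => ∑ k, (q i k - q j k) ^ 2 with hdq
  set dp : Fin n → Fin n → ℝ := fun i j => ∑ m, (p i m - p j m) ^ 2 with hdp
  have hdq_nonneg : ∀ i j, 0 ≤ dq i j :=
    fun i j => Finset.sum_nonneg fun k _ => sq_nonneg _
  have hdp_nonneg : ∀ i j, 0 ≤ dp i j :=
    fun i j => Finset.sum_nonneg fun m _ => sq_nonneg _
  have hdistq : ∀ i j, dist (q i) (q j) = Real.sqrt (dq i j) := by
    intro i j
    rw [EuclideanSpace.dist_eq]
    congr 1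
    exact Finset.sum_congr rfl fun k _ => by rw [Real.dist_eq, sq_abs]
  have hdistp : ∀ i j, dist (p i) (p j) = Real.sqrt (dp i j) := by
    intro i j
    rw [EuclideanSpace.dist_eq]
    congr 1
    exact Finset.sum_congr rfl fun m _ => by rw [Real.dist_eq, sq_abs]
  -- the relation on edges and diagonal
  have hrel : ∀ i j, (i = j ∨ G.Adj i j) → dq i j = dp i j := by
    rintro i j (rfl | hadj)
    · simp [hdq, hdp]
    · have := hq i j hadj
      rw [hdistq, hdistp] at this
      have h1 := congrArg (fun x => x ^ 2) this
      simpa [Real.sq_sqrt (hdq_nonneg i j), Real.sq_sqrt (hdp_nonneg i j)] using h1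
  have hSrel : ∀ i j, S i j ≠ 0 → (i = j ∨ G.Adj i j) := by
    intro i j hSij
    by_contra h
    push_neg at h
    exact hSij (hsupp i j h.1 h.2)
  -- energy argument: every coordinate function of q is in the kernel of S
  have expandq : ∀ i j, dq i j
      = (∑ k, q i k ^ 2) + (∑ k, q j k ^ 2) - 2 * ∑ k, q i k * q j k := by
    intro i j
    rw [hdq, Finset.mul_sum, ← Finset.sum_add_distrib, ← Finset.sum_sub_distrib]
    exact Finset.sum_congr rfl fun k _ => by ring
  have expandp : ∀ i j, dp i j
      = (∑ m, p i m ^ 2) + (∑ m, p j m ^ 2) - 2 * ∑ m, p i m * p j m := by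
    intro i j
    rw [hdp, Finset.mul_sum, ← Finset.sum_add_distrib, ← Finset.sum_sub_distrib]
    exact Finset.sum_congr rfl fun m _ => by ring
  have SP : ∀ (i : Fin n) (m : Fin r), ∑ j, S i j * p j m = 0 := by
    intro i m
    have := key i (Fin.castSucc m)
    rw [← this]
    exact Finset.sum_congr rfl fun j _ => by
      rw [show calA p (Fin.castSucc m) j = p j m from colA_castSucc p j m]
  -- the double sums
  have colsum : ∀ j : Fin n, ∑ i, S i j = 0 := by
    intro j
    rw [← rowsum j]
    exact Finset.sum_congr rfl fun i _ => hsymm.apply j i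
  have sum_aq : ∀ (a : Fin n → ℝ), ∑ i, ∑ j, S i j * a j = 0 := by
    intro a
    rw [Finset.sum_comm]
    apply Finset.sum_eq_zero
    intro j _
    rw [← Finset.sum_mul, colsum j, zero_mul]
  have hEq : (∑ i, ∑ j, S i j * dq i j) = -2 * ∑ k, ∑ i, q i k * ∑ j, S i j * q j k := by
    have h1 : ∀ i, ∑ j, S i j * dq i j
        = (∑ j, S i j * (∑ k, q j k ^ 2)) - 2 * ∑ j, S i j * ∑ k, q i k * q j k := by
      intro i
      have : ∀ j, S i j * dq i j = S i j * (∑ k, q i k ^ 2) + S i j * (∑ k, q j k ^ 2)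
          - 2 * (S i j * ∑ k, q i k * q j k) := by
        intro j; rw [expandq i j]; ring
      rw [Finset.sum_congr rfl fun j _ => this j, Finset.sum_sub_distrib,
        Finset.sum_add_distrib, ← Finset.sum_mul, rowsum i, ← Finset.mul_sum]
      ring
    rw [Finset.sum_congr rfl fun i _ => h1 i, Finset.sum_sub_distrib,
      sum_aq (fun j => ∑ k, q j k ^ 2)]
    have h2 : ∀ i, ∑ j, S i j * ∑ k, q i k * q j k = ∑ k, q i k * ∑ j, S i j * q j k := by
      intro i
      have e1 : ∀ j : Fin n, S i j * ∑ k, q i k * q j k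
          = ∑ k, q i k * (S i j * q j k) := by
        intro j
        rw [Finset.mul_sum]
        exact Finset.sum_congr rfl fun k _ => by ring
      rw [Finset.sum_congr rfl fun j _ => e1 j, Finset.sum_comm]
      exact Finset.sum_congr rfl fun k _ => by rw [Finset.mul_sum]
    rw [Finset.sum_congr rfl fun i _ => congrArg (2 * ·) (h2 i)]
    rw [← Finset.mul_sum, Finset.sum_comm]
    ring
  have hEp : (∑ i, ∑ j, S i j * dp i j) = 0 := by
    have h1 : ∀ i, ∑ j, S i j * dp i j = ∑ j, S i j * (∑ m, p j m ^ 2) := by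
      intro i
      have : ∀ j, S i j * dp i j = S i j * (∑ m, p i m ^ 2) + S i j * (∑ m, p j m ^ 2)
          - 2 * (S i j * ∑ m, p i m * p j m) := by
        intro j; rw [expandp i j]; ring
      rw [Finset.sum_congr rfl fun j _ => this j, Finset.sum_sub_distrib,
        Finset.sum_add_distrib, ← Finset.sum_mul, rowsum i]
      have h3 : ∑ j, S i j * ∑ m, p i m * p j m = 0 := by
        have e1 : ∀ j : Fin n, S i j * ∑ m, p i m * p j m
            = ∑ m, p i m * (S i j * p j m) := by
          intro j
          rw [Finset.mul_sum]
          exact Finset.sum_congr rfl fun m _ => by ring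
        rw [Finset.sum_congr rfl fun j _ => e1 j, Finset.sum_comm]
        apply Finset.sum_eq_zero
        intro m _
        rw [← Finset.mul_sum, SP i m, mul_zero]
      rw [← Finset.mul_sum, h3]
      ring
    rw [Finset.sum_congr rfl fun i _ => h1 i]
    exact sum_aq _
    -- termwise equality of the two energies
  have hEqp : (∑ i, ∑ j, S i j * dq i j) = ∑ i, ∑ j, S i j * dp i j := by
    refine Finset.sum_congr rfl fun i _ => Finset.sum_congr rfl fun j _ => ?_
    by_cases hij : S i j = 0
    · rw [hij, zero_mul, zero_mul]
    · rw [hrel i j (hSrel i j hij)]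
  have hQsum : ∑ k, ∑ i, q i k * ∑ j, S i j * q j k = 0 := by
    have := hEq.symm.trans (hEqp.trans hEp)
    linarith
  have hQk : ∀ k : Fin s, S.mulVec (fun j => q j k) = 0 := by
    intro k
    have hnn : ∀ k' : Fin s, (0:ℝ) ≤ ∑ i, q i k' * ∑ j, S i j * q j k' := by
      intro k'
      have := hpsd.dotProduct_mulVec_nonneg (fun j => q j k')
      simpa [dotProduct, Matrix.mulVec, star_trivial] using this
    have hzero : ∑ i, q i k * ∑ j, S i j * q j k = 0 :=
      (Finset.sum_eq_zero_iff_of_nonneg (fun k' _ => hnn k')).mp hQsum k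
        (Finset.mem_univ k)
    have hdot : (fun j => q j k) ⬝ᵥ S.mulVec (fun j => q j k) = 0 := by
      simpa [dotProduct, Matrix.mulVec] using hzero
    have := (hpsd.dotProduct_mulVec_zero_iff (fun j => q j k)).mp
      (by simpa [star_trivial] using hdot)
    exact this
  -- q is an affine image of p
  have hCex : ∀ k : Fin s, ∃ c : Fin (r + 1) → ℝ, ∀ j, q j k = c ⬝ᵥ colA p j :=
    fun k => mem_ker _ (hQk k)
  choose C hC using hCex
  -- the quadratic form g
  have hColdiff : ∀ (i j : Fin n) (k : Fin s),
      C k ⬝ᵥ (colA p i - colA p j) = q i k - q j k := by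
    intro i j k
    rw [dotProduct_sub, ← hC k i, ← hC k j]
  have hdotuu : ∀ i j : Fin n,
      (colA p i - colA p j) ⬝ᵥ (colA p i - colA p j) = dp i j := by
    intro i j
    have : ∀ m : Fin (r + 1), (colA p i - colA p j) m * (colA p i - colA p j) m
        = (colA p i m - colA p j m) * (colA p i m - colA p j m) := fun m => rfl
    rw [dotProduct, Finset.sum_congr rfl fun m _ => this m,
      Fin.sum_univ_castSucc]
    simp only [colA_last, colA_castSucc, sub_self, mul_zero, zero_mul, add_zero]
    rw [hdp]
    exact Finset.sum_congr rfl fun m _ => by ring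
  have gdq : ∀ i j : Fin n,
      gL C (colA p i - colA p j) (colA p i - colA p j) = dq i j - dp i j := by
    intro i j
    rw [gL_apply, hdotuu i j]
    congr 1
    rw [hdq]
    exact Finset.sum_congr rfl fun k _ => by rw [hColdiff i j k]; ring
  -- the vector y of "lifted" quadratic values lies in the kernel of S
  set y : Fin n → ℝ := fun i => gL C (colA p i) (colA p i) with hy
  have hguu : ∀ i j : Fin n, (i = j ∨ G.Adj i j) →
      y i - 2 * gL C (colA p i) (colA p j) + y j = 0 := by
    intro i j hij
    have h0 := gdq i j
    rw [hrel i j hij, sub_self] at h0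
    rw [gL_expand] at h0
    rw [hy]
    linarith
  have hSy : S.mulVec y = 0 := by
    funext i
    have hterm : ∀ j, S i j * (y i - 2 * gL C (colA p i) (colA p j) + y j) = 0 := by
      intro j
      by_cases hij : S i j = 0
      · rw [hij, zero_mul]
      · rw [hguu i j (hSrel i j hij), mul_zero]
    have hsum0 : ∑ j, S i j * (y i - 2 * gL C (colA p i) (colA p j) + y j) = 0 :=
      Finset.sum_eq_zero fun j _ => hterm j
    have e2 : ∑ j, S i j * (gL C (colA p i)) (colA p j)
        = (gL C (colA p i)) (∑ j, S i j • colA p j) := by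
      rw [map_sum]
      exact Finset.sum_congr rfl fun j _ => by rw [LinearMap.map_smul, smul_eq_mul]
    rw [scol i, map_zero] at e2
    have expand : ∑ j, S i j * (y i - 2 * gL C (colA p i) (colA p j) + y j)
        = (∑ j, S i j) * y i - 2 * (∑ j, S i j * (gL C (colA p i)) (colA p j))
          + ∑ j, S i j * y j := by
      rw [Finset.sum_mul, Finset.mul_sum, ← Finset.sum_sub_distrib,
        ← Finset.sum_add_distrib]
      exact Finset.sum_congr rfl fun j _ => by ring
    rw [expand, rowsum i, e2] at hsum0
    have : ∑ j, S i j * y j = 0 := by linarith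
    simpa [Matrix.mulVec, dotProduct] using this
  obtain ⟨d, hd⟩ := mem_ker y hSy
  -- the corrected form h vanishes identically on the lifted points
  set w : Fin (r + 1) → ℝ := Pi.single (Fin.last r) (1:ℝ) with hwdef
  have hw : ∀ j : Fin n, w ⬝ᵥ colA p j = 1 := by
    intro j
    rw [hwdef, single_dotProduct, colA_last, mul_one]
  have hrel0 : ∀ i j : Fin n, (i = j ∨ G.Adj i j) →
      hL C d w (colA p i) (colA p j) = 0 := by
    intro i j hij
    have hgij : gL C (colA p i) (colA p j) = (y i + y j) / 2 := by
      have := hguu i j hij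
      linarith
    rw [hL_apply, hgij, hw i, hw j, ← hd i, ← hd j]
    ring
  have hall : ∀ i : Fin n, hL C d w (colA p i) = 0 := by
    intro i
    obtain ⟨t, htmem, htcard⟩ := nbhd i
    exact vanish_of_vanish_on hgen t htcard _ (fun j hj => hrel0 i j ((htmem j hj).imp Eq.symm id))
  have hallall : ∀ i j : Fin n, ∀ z, hL C d w (colA p i) z = 0 := by
    intro i j z
    rw [hall i]
    rfl
  -- conclude equality of all squared distances
  have hfinal : ∀ i j : Fin n, dq i j = dp i j := by
    intro i j
    have e3 : hL C d w (colA p i - colA p j) (colA p i - colA p j)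
        = gL C (colA p i - colA p j) (colA p i - colA p j) := by
      have hwu : w ⬝ᵥ (colA p i - colA p j) = 0 := by
        rw [dotProduct_sub, hw i, hw j, sub_self]
      rw [hL_apply, hwu]
      ring
    have e4 : hL C d w (colA p i - colA p j) (colA p i - colA p j) = 0 := by
      rw [map_sub]
      rw [hL_symm C d w _ (colA p i), hL_symm C d w _ (colA p j)]
      rw [map_sub, map_sub]
      rw [hallall i j (colA p i), hallall i j (colA p j),
        hallall j i (colA p i), hallall j i (colA p j)]
      ring
    have := e4.symm.trans e3
    have h5 := gdq i j
    rw [← this] at h5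
    linarith [h5]
  intro i j
  rw [hdistq, hdistp, hfinal i j]
end
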